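/- Let $x \in G_\mathbb{C}$ satisfy $x \in G_\mathbb{R} Q$ and $x \in G_\mathbb{R} t_1(-\pi/4) \overline{Q}$. Then the three sets $x K_\mathbb{C} w_{\beta_1} w_{\beta_2} B \cap G_\mathbb{R} c_{\beta_1} w_{\beta_2} B$, $x K_\mathbb{C} w_{\beta_1} B \cap G_\mathbb{R} c_{\beta_1} B$, and $x K_\mathbb{C} c_{\beta_2} w_{\beta_1} B \cap G_\mathbb{R} c_{\beta_1} c_{\beta_2} B$ are all nonempty. (Remark 3.1 (i): $xS_2\cap S'_9\ne\emptyset$, $xS_4\cap S'_8\ne\emptyset$, $xS_6\cap S'_{\rm op}\ne\emptyset$.) -/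

import Mathlib

open Matrix

set_option maxHeartbeats 2000000

noncomputable section

/-- 4×4 complex matrices. -/
abbrev M4 : Type := Matrix (Fin 4) (Fin 4) ℂ

/-- The standard symplectic form matrix `J = [[0, -I₂],[I₂, 0]]`. -/
def Jmat : M4 := !![0, 0, -1, 0; 0, 0, 0, -1; 1, 0, 0, 0; 0, 1, 0, 0]

/-- `G_ℂ = Sp(2,ℂ) = {g ∈ GL(4,ℂ) : ᵗg J g = J}`. -/
def GC : Set M4 := {g | IsUnit g ∧ gᵀ * Jmat * g = Jmat}

/-- `K_ℂ = {diag(g, ᵗg⁻¹) : g ∈ GL(2,ℂ)}`. -/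
def KC : Set M4 :=
  {m | ∃ g : Matrix (Fin 2) (Fin 2) ℂ, IsUnit g ∧
    m = !![g 0 0, g 0 1, 0, 0;
           g 1 0, g 1 1, 0, 0;
           0, 0, (gᵀ)⁻¹ 0 0, (gᵀ)⁻¹ 0 1;
           0, 0, (gᵀ)⁻¹ 1 0, (gᵀ)⁻¹ 1 1]}

/-- The Hermitian form of signature (2,2): `(w,z) = w̄₁z₁ + w̄₂z₂ - w̄₃z₃ - w̄₄z₄`. -/
def hermForm (w z : Fin 4 → ℂ) : ℂ :=
  star (w 0) * z 0 + star (w 1) * z 1 - star (w 2) * z 2 - star (w 3) * z 3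

/-- `G_ℝ = G_ℂ ∩ U(2,2)`. -/
def GR : Set M4 :=
  {g | g ∈ GC ∧ ∀ w z : Fin 4 → ℂ, hermForm (g.mulVec w) (g.mulVec z) = hermForm w z}

/-- The standard basis vectors of `ℂ⁴`. -/
def stdVec (i : Fin 4) : Fin 4 → ℂ := Pi.single i 1

/-- `U₊ = ℂe₁ ⊕ ℂe₂`. -/
def Uplus : Submodule ℂ (Fin 4 → ℂ) := Submodule.span ℂ {stdVec 0, stdVec 1}

/-- `U₋ = ℂe₃ ⊕ ℂe₄`. -/
def Uminus : Submodule ℂ (Fin 4 → ℂ) := Submodule.span ℂ {stdVec 2, stdVec 3}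

/-- The line `ℂe₁`. -/
def line1 : Submodule ℂ (Fin 4 → ℂ) := Submodule.span ℂ {stdVec 0}

/-- `Q = {g ∈ G_ℂ : g U₊ = U₊}`. -/
def Qpar : Set M4 := {g | g ∈ GC ∧ Uplus.map g.mulVecLin = Uplus}

/-- `Q̄ = {g ∈ G_ℂ : g U₋ = U₋}`. -/
def Qbar : Set M4 := {g | g ∈ GC ∧ Uminus.map g.mulVecLin = Uminus}

/-- The Borel subgroup `B = {g ∈ G_ℂ : g ℂe₁ = ℂe₁, g U₊ = U₊}`. -/
def Bor : Set M4 :=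
  {g | g ∈ GC ∧ line1.map g.mulVecLin = line1 ∧ Uplus.map g.mulVecLin = Uplus}

/-- `t₁(s) = exp s(E₃₁ - E₁₃)`. -/
def t1 (s : ℝ) : M4 :=
  !![(Real.cos s : ℂ), 0, (-(Real.sin s) : ℂ), 0;
     0, 1, 0, 0;
     ((Real.sin s : ℝ) : ℂ), 0, (Real.cos s : ℂ), 0;
     0, 0, 0, 1]

/-- `t₂(s) = exp s(E₄₂ - E₂₄)`. -/
def t2 (s : ℝ) : M4 :=
  !![1, 0, 0, 0;
     0, (Real.cos s : ℂ), 0, (-(Real.sin s) : ℂ);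
     0, 0, 1, 0;
     0, ((Real.sin s : ℝ) : ℂ), 0, (Real.cos s : ℂ)]

def cb1 : M4 := t1 (Real.pi / 4)
def cb2 : M4 := t2 (Real.pi / 4)
def wb1 : M4 := t1 (Real.pi / 2)
def wb2 : M4 := t2 (Real.pi / 2)

/-- `c_δ = (1/√2) · [[1,0,0,-1],[0,1,-1,0],[0,1,1,0],[1,0,0,1]]`. -/
def cdelta : M4 :=
  ((Real.sqrt 2 : ℂ))⁻¹ • !![1, 0, 0, -1; 0, 1, -1, 0; 0, 1, 1, 0; 1, 0, 0, 1]

/-- The double coset `A g C = {a g c : a ∈ A, c ∈ C}`. -/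
def dc (A : Set M4) (g : M4) (C : Set M4) : Set M4 :=
  {m | ∃ a ∈ A, ∃ c ∈ C, m = a * g * c}

/-! ### Auxiliary material -/

namespace Rem31

/-- `t₁(-π/4)`. -/
def tm : M4 := t1 (-(Real.pi / 4))

lemma J_mul_J : Jmat * Jmat = -1 := by
  ext i j
  fin_cases i <;> fin_cases j <;>
    simp [Jmat, Matrix.mul_apply, Fin.sum_univ_four, Matrix.one_apply, Matrix.vecHead,
      Matrix.vecTail]

lemma mem_GC_of {g : M4} (h : gᵀ * Jmat * g = Jmat) : g ∈ GC := by
  refine ⟨?_, h⟩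
  have hL : ((-Jmat) * gᵀ * Jmat) * g = 1 := by
    have : ((-Jmat) * gᵀ * Jmat) * g = (-Jmat) * (gᵀ * Jmat * g) := by noncomm_ring
    rw [this, h]
    have : (-Jmat) * Jmat = -(Jmat * Jmat) := by noncomm_ring
    rw [this, J_mul_J, neg_neg]
  exact IsUnit.of_mul_eq_one_right _ hL

lemma GC_mul {g h : M4} (hg : g ∈ GC) (hh : h ∈ GC) : g * h ∈ GC := by
  refine ⟨hg.1.mul hh.1, ?_⟩
  have : (g * h)ᵀ * Jmat * (g * h) = hᵀ * (gᵀ * Jmat * g) * h := by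
    rw [Matrix.transpose_mul]; noncomm_ring
  rw [this, hg.2, hh.2]

lemma GR_mul {g h : M4} (hg : g ∈ GR) (hh : h ∈ GR) : g * h ∈ GR := by
  refine ⟨GC_mul hg.1 hh.1, fun w z => ?_⟩
  have e : ∀ v, (g * h).mulVec v = g.mulVec (h.mulVec v) := fun v =>
    (Matrix.mulVec_mulVec v g h).symm
  rw [e, e, hg.2, hh.2]

lemma one_mem_Bor : (1 : M4) ∈ Bor := by
  refine ⟨⟨isUnit_one, by simp⟩, ?_, ?_⟩ <;>
    simp [Matrix.mulVecLin_one, Submodule.map_id]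

/-- Membership in the Borel from the shape of the matrix. -/
lemma mem_Bor_of {p : M4} (hsp : pᵀ * Jmat * p = Jmat)
    (h10 : p 1 0 = 0) (h20 : p 2 0 = 0) (h30 : p 3 0 = 0)
    (h21 : p 2 1 = 0) (h31 : p 3 1 = 0) : p ∈ Bor := by
  have hGC : p ∈ GC := mem_GC_of hsp
  have e02 := congrArg (fun m => m 0 2) hsp
  have e03 := congrArg (fun m => m 0 3) hsp
  have e13 := congrArg (fun m => m 1 3) hsp
  have e12 := congrArg (fun m => m 1 2) hsp
  simp only [Matrix.mul_apply, Fin.sum_univ_four, Matrix.transpose_apply] at e02 e03 e13 e12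
  simp [Jmat, h10, h20, h30, h21, h31] at e02 e03 e13 e12
  -- e02 : p 0 0 * p 2 2 = 1,  e03 : p 0 0 = 0 ∨ p 2 3 = 0
  have h00 : p 0 0 ≠ 0 := by
    intro h0; rw [h0] at e02; simp at e02
  have h23 : p 2 3 = 0 := e03.resolve_left h00
  have h11 : p 1 1 ≠ 0 := by
    intro h0
    rw [h0, h23] at e13
    simp at e13
  -- the images of the basis vectors
  have him1 : p.mulVecLin (stdVec 0) = p 0 0 • stdVec 0 := by
    funext i
    simp only [Matrix.mulVecLin_apply, stdVec, Matrix.mulVec_single]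
    fin_cases i <;> simp [h10, h20, h30]
  have him2 : p.mulVecLin (stdVec 1) = p 0 1 • stdVec 0 + p 1 1 • stdVec 1 := by
    funext i
    simp only [Matrix.mulVecLin_apply, stdVec, Matrix.mulVec_single]
    fin_cases i <;> simp [h21, h31]
  refine ⟨hGC, ?_, ?_⟩
  · rw [line1, Submodule.map_span, Set.image_singleton, him1]
    have := Submodule.span_singleton_smul_eq (R := ℂ) (M := Fin 4 → ℂ)
      (isUnit_iff_ne_zero.2 h00) (stdVec 0)
    simpa [Submodule.span_singleton_eq_range] using this
  · rw [Uplus, Submodule.map_span]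
    have himg : p.mulVecLin '' {stdVec 0, stdVec 1} =
        {p 0 0 • stdVec 0, p 0 1 • stdVec 0 + p 1 1 • stdVec 1} := by
      rw [Set.image_pair, him1, him2]
    rw [himg]
    apply le_antisymm
    · rw [Submodule.span_le]
      rintro v (rfl | rfl)
      · exact Submodule.smul_mem _ _ (Submodule.subset_span (by simp))
      · exact Submodule.add_mem _
          (Submodule.smul_mem _ _ (Submodule.subset_span (by simp)))
          (Submodule.smul_mem _ _ (Submodule.subset_span (by simp)))
    · rw [Submodule.span_le]
      rintro v (rfl | rfl)
      · rw [SetLike.mem_coe, Submodule.mem_span_pair]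
        exact ⟨(p 0 0)⁻¹, 0, by
          rw [smul_smul]
          field_simp
          simp⟩
      · rw [SetLike.mem_coe, Submodule.mem_span_pair]
        refine ⟨-(p 0 1 * (p 1 1)⁻¹ * (p 0 0)⁻¹), (p 1 1)⁻¹, ?_⟩
        rw [smul_add, smul_smul, smul_smul, smul_smul]
        have c1 : -(p 0 1 * (p 1 1)⁻¹ * (p 0 0)⁻¹) * p 0 0 + (p 1 1)⁻¹ * p 0 1 = 0 := by
          field_simp
          ring
        have c2 : (p 1 1)⁻¹ * p 1 1 = 1 := by field_simp
        rw [← add_assoc, ← add_smul, c1, c2, zero_smul, zero_add, one_smul]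


/-- Two-by-two block diagonal embedding. -/
def blk (g h : Matrix (Fin 2) (Fin 2) ℂ) : M4 :=
  !![g 0 0, g 0 1, 0, 0;
     g 1 0, g 1 1, 0, 0;
     0, 0, h 0 0, h 0 1;
     0, 0, h 1 0, h 1 1]

lemma mem_KC_of {g h : Matrix (Fin 2) (Fin 2) ℂ} (hg : IsUnit g) (hgh : gᵀ * h = 1) :
    blk g h ∈ KC := by
  refine ⟨g, hg, ?_⟩
  rw [Matrix.inv_eq_right_inv hgh]
  rfl

lemma blk_mul (g1 h1 g2 h2 : Matrix (Fin 2) (Fin 2) ℂ) :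
    blk g1 h1 * blk g2 h2 = blk (g1 * g2) (h1 * h2) := by
  ext i j
  fin_cases i <;> fin_cases j <;>
    simp [blk, Matrix.mul_apply, Fin.sum_univ_four, Fin.sum_univ_two, Matrix.vecHead, Matrix.vecTail]

lemma blk_one : blk 1 1 = (1 : M4) := by
  ext i j
  fin_cases i <;> fin_cases j <;>
    simp [blk, Matrix.one_apply, Matrix.vecHead, Matrix.vecTail]

/-- The lower-triangular unipotent symmetric matrices. -/
def nmat (s11 s12 s22 : ℂ) : M4 :=
  !![1, 0, 0, 0;
     0, 1, 0, 0;
     s11, s12, 1, 0;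
     s12, s22, 0, 1]

lemma qbar_decomp {q : M4} (hq : q ∈ Qbar) :
    ∃ (s11 s12 s22 : ℂ) (k k' : M4), k ∈ KC ∧ k' ∈ KC ∧ k * k' = 1 ∧ k' * k = 1 ∧
      q = nmat s11 s12 s22 * k := by
  -- the two vanishing columns
  have hm : ∀ i : Fin 4, (i = 2 ∨ i = 3) → ∀ l : Fin 4, (l = 0 ∨ l = 1) → q l i = 0 := by
    intro i hi l hl
    have hmem : q.mulVecLin (stdVec i) ∈ Uminus := by
      rw [← hq.2]
      refine Submodule.mem_map_of_mem (Submodule.subset_span ?_)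
      rcases hi with rfl | rfl <;> simp
    rw [Uminus, Submodule.mem_span_pair] at hmem
    obtain ⟨α, β, hαβ⟩ := hmem
    have := congr_fun hαβ l
    rcases hl with rfl | rfl <;>
      simpa [stdVec, Matrix.mulVecLin_apply, Matrix.mulVec_single] using this.symm
  have q02 : q 0 2 = 0 := hm 2 (Or.inl rfl) 0 (Or.inl rfl)
  have q12 : q 1 2 = 0 := hm 2 (Or.inl rfl) 1 (Or.inr rfl)
  have q03 : q 0 3 = 0 := hm 3 (Or.inr rfl) 0 (Or.inl rfl)
  have q13 : q 1 3 = 0 := hm 3 (Or.inr rfl) 1 (Or.inr rfl)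
  -- scalar consequences of the symplectic relation
  have hsp := hq.1.2
  have eq1 := congrArg (fun m => m 0 2) hsp
  have eq2 := congrArg (fun m => m 0 3) hsp
  have eq3 := congrArg (fun m => m 1 2) hsp
  have eq4 := congrArg (fun m => m 1 3) hsp
  have eq5 := congrArg (fun m => m 0 1) hsp
  simp only [Matrix.mul_apply, Fin.sum_univ_four, Matrix.transpose_apply] at eq1 eq2 eq3 eq4 eq5
  simp [Jmat, q02, q12, q03, q13, Matrix.vecHead, Matrix.vecTail] at eq1 eq2 eq3 eq4 eq5
  have hdet : (q 0 0 * q 1 1 - q 0 1 * q 1 0) * (q 2 2 * q 3 3 - q 2 3 * q 3 2) = 1 := by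
    linear_combination (-(q 0 1 * q 2 3 + q 1 1 * q 3 3)) * eq1 +
      (q 0 1 * q 2 2 + q 1 1 * q 3 2) * eq2 - eq4
  have hdA : (q 0 0 * q 1 1 - q 0 1 * q 1 0) ≠ 0 := by
    intro h0; rw [h0, zero_mul] at hdet; exact zero_ne_one hdet
  obtain ⟨d, hinv⟩ : ∃ d : ℂ, d * (q 0 0 * q 1 1 - q 0 1 * q 1 0) = 1 :=
    ⟨_, inv_mul_cancel₀ hdA⟩
  set A : Matrix (Fin 2) (Fin 2) ℂ := !![q 0 0, q 0 1; q 1 0, q 1 1] with hA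
  set D2 : Matrix (Fin 2) (Fin 2) ℂ := !![q 2 2, q 2 3; q 3 2, q 3 3] with hD2
  set Ainv : Matrix (Fin 2) (Fin 2) ℂ :=
    !![d * q 1 1, d * (-(q 0 1)); d * (-(q 1 0)), d * q 0 0] with hAinv
  have hAAi : A * Ainv = 1 := by
    ext i j
    fin_cases i <;> fin_cases j <;>
      · simp [hA, hAinv, Matrix.mul_apply, Fin.sum_univ_two, Matrix.one_apply,
          Matrix.vecHead, Matrix.vecTail]
        first
          | ring1
          | linear_combination hinv
  have hAiA : Ainv * A = 1 := by
    ext i j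
    fin_cases i <;> fin_cases j <;>
      · simp [hA, hAinv, Matrix.mul_apply, Fin.sum_univ_two, Matrix.one_apply,
          Matrix.vecHead, Matrix.vecTail]
        first
          | ring1
          | linear_combination hinv
  have hATD : Aᵀ * D2 = 1 := by
    ext i j
    fin_cases i <;> fin_cases j <;>
      · simp [hA, hD2, Matrix.mul_apply, Matrix.transpose_apply, Fin.sum_univ_two,
          Matrix.one_apply, Matrix.vecHead, Matrix.vecTail]
        first
          | linear_combination -eq1
          | linear_combination -eq2
          | linear_combination -eq3
          | linear_combination -eq4
  have hD2AT : D2 * Aᵀ = 1 := mul_eq_one_comm.mp hATD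
  have hUA : IsUnit A := IsUnit.of_mul_eq_one _ hAAi
  have hUAinv : IsUnit Ainv := IsUnit.of_mul_eq_one_right _ hAAi
  have hk : blk A D2 ∈ KC := mem_KC_of hUA hATD
  have hk' : blk Ainv Aᵀ ∈ KC := by
    refine mem_KC_of hUAinv ?_
    rw [← Matrix.transpose_mul, hAAi, Matrix.transpose_one]
  have hkk' : blk A D2 * blk Ainv Aᵀ = 1 := by
    rw [blk_mul, hAAi, hD2AT, blk_one]
  have hk'k : blk Ainv Aᵀ * blk A D2 = 1 := by
    rw [blk_mul, hAiA, hATD, blk_one]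
  -- scalar entries of D2 * Aᵀ = 1
  have g00 := congrArg (fun m => m 0 0) hD2AT
  have g01 := congrArg (fun m => m 0 1) hD2AT
  have g10 := congrArg (fun m => m 1 0) hD2AT
  have g11 := congrArg (fun m => m 1 1) hD2AT
  simp [hA, hD2, Matrix.mul_apply, Matrix.transpose_apply, Fin.sum_univ_two,
    Matrix.one_apply, Matrix.vecHead, Matrix.vecTail] at g00 g01 g10 g11
  refine ⟨d * (q 2 0 * q 1 1 - q 2 1 * q 1 0),
    d * (q 2 1 * q 0 0 - q 2 0 * q 0 1),
    d * (q 3 1 * q 0 0 - q 3 0 * q 0 1),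
    blk A D2, blk Ainv Aᵀ, hk, hk', hkk', hk'k, ?_⟩
  have hqk : q = q * blk Ainv Aᵀ * blk A D2 := by
    rw [Matrix.mul_assoc, hk'k, Matrix.mul_one]
  have hN : q * blk Ainv Aᵀ = nmat (d * (q 2 0 * q 1 1 - q 2 1 * q 1 0))
      (d * (q 2 1 * q 0 0 - q 2 0 * q 0 1)) (d * (q 3 1 * q 0 0 - q 3 0 * q 0 1)) := by
    ext i j
    fin_cases i <;> fin_cases j <;>
      · simp [hA, hAinv, blk, nmat, Matrix.mul_apply, Matrix.transpose_apply,
          Fin.sum_univ_four, Matrix.vecHead, Matrix.vecTail, q02, q03, q12, q13]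
        try first
          | ring1
          | linear_combination hinv
          | linear_combination g00
          | linear_combination g01
          | linear_combination g10
          | linear_combination g11
          | linear_combination d * eq5
          | linear_combination (-d) * eq5
  rw [hN] at hqk
  exact hqk

/-! ### explicit forms of the rotation matrices -/

/-- `√2/2` as a complex number. -/
def cc : ℂ := ((Real.sqrt 2 / 2 : ℝ) : ℂ)

lemma cc_sq : cc ^ 2 = 1 / 2 := by
  have h2 : (Real.sqrt 2) ^ 2 = 2 := Real.sq_sqrt (by norm_num)
  have : (Real.sqrt 2 / 2 : ℝ) ^ 2 = 1 / 2 := by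
    rw [div_pow, h2]; norm_num
  unfold cc
  rw [← Complex.ofReal_pow, this]
  norm_num

lemma star_cc : star cc = cc := Complex.conj_ofReal _

lemma tm_eq : tm = !![cc, 0, cc, 0; 0, 1, 0, 0; -cc, 0, cc, 0; 0, 0, 0, 1] := by
  unfold tm t1 cc
  rw [Real.cos_neg, Real.sin_neg, Real.cos_pi_div_four, Real.sin_pi_div_four]
  push_cast
  norm_num

lemma cb1_eq : cb1 = !![cc, 0, -cc, 0; 0, 1, 0, 0; cc, 0, cc, 0; 0, 0, 0, 1] := by
  unfold cb1 t1 cc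
  rw [Real.cos_pi_div_four, Real.sin_pi_div_four]
  try push_cast
  try norm_num

lemma cb2_eq : cb2 = !![1, 0, 0, 0; 0, cc, 0, -cc; 0, 0, 1, 0; 0, cc, 0, cc] := by
  unfold cb2 t2 cc
  rw [Real.cos_pi_div_four, Real.sin_pi_div_four]
  try push_cast
  try norm_num

lemma wb1_eq : wb1 = !![0, 0, -1, 0; 0, 1, 0, 0; 1, 0, 0, 0; 0, 0, 0, 1] := by
  unfold wb1 t1
  rw [Real.cos_pi_div_two, Real.sin_pi_div_two]
  push_cast
  norm_num

lemma wb2_eq : wb2 = !![1, 0, 0, 0; 0, 0, 0, -1; 0, 0, 1, 0; 0, 1, 0, 0] := by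
  unfold wb2 t2
  rw [Real.cos_pi_div_two, Real.sin_pi_div_two]
  push_cast
  norm_num

lemma id_tm_wb1 : tm * wb1 = cb1 := by
  rw [tm_eq, wb1_eq, cb1_eq]
  ext i j
  fin_cases i <;> fin_cases j <;>
    · simp [Matrix.mul_apply, Fin.sum_univ_four, Matrix.vecHead, Matrix.vecTail]
      try ring

/-- matrices supported on the `{0,2}`-plane commute with those supported on the
`{1,3}`-plane. -/
lemma comm_13_24 (m00 m02 m20 m22 p q r s : ℂ) :
    !![m00, 0, m02, 0; 0, 1, 0, 0; m20, 0, m22, 0; 0, 0, 0, 1] *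
      !![1, 0, 0, 0; 0, p, 0, q; 0, 0, 1, 0; 0, r, 0, s] =
    !![1, 0, 0, 0; 0, p, 0, q; 0, 0, 1, 0; 0, r, 0, s] *
      !![m00, 0, m02, 0; 0, 1, 0, 0; m20, 0, m22, 0; 0, 0, 0, 1] := by
  ext i j
  fin_cases i <;> fin_cases j <;>
    · simp [Matrix.mul_apply, Fin.sum_univ_four, Matrix.vecHead, Matrix.vecTail]
      try ring

lemma comm_tm_cb2 : tm * cb2 = cb2 * tm := by
  rw [tm_eq, cb2_eq]; exact comm_13_24 _ _ _ _ _ _ _ _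

lemma comm_wb1_cb2 : wb1 * cb2 = cb2 * wb1 := by
  rw [wb1_eq, cb2_eq]; exact comm_13_24 _ _ _ _ _ _ _ _

lemma comm_cb1_cb2 : cb2 * cb1 = cb1 * cb2 := by
  rw [cb1_eq, cb2_eq]; exact (comm_13_24 _ _ _ _ _ _ _ _).symm

/-! ### the three matrix identities -/

def bmat1 (s11 s12 s22 : ℂ) : M4 :=
  !![1, 0, -s11, -s12; 0, 1, -s12, -s22; 0, 0, 1, 0; 0, 0, 0, 1]

lemma id1 (s11 s12 s22 : ℂ) :
    nmat s11 s12 s22 * (wb1 * wb2) = (wb1 * wb2) * bmat1 s11 s12 s22 := by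
  rw [wb1_eq, wb2_eq]
  ext i j
  fin_cases i <;> fin_cases j <;>
    · simp [nmat, bmat1, Matrix.mul_apply, Fin.sum_univ_four, Matrix.vecHead, Matrix.vecTail]
      try ring

def r2mat (aC s22 sb : ℂ) : M4 :=
  !![1, 0, 0, 0; 0, aC, 0, aC * sb; 0, 0, 1, 0; 0, aC * s22, 0, aC]

def bmat2 (aC s11 s12 s22 sb : ℂ) : M4 :=
  !![1, s12, -s11, 0;
     0, aC - aC * s22 * sb, aC * sb * s12, -(aC * sb);
     0, 0, 1, 0;
     0, 0, -(aC * s12), aC]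

lemma id2 (aC s11 s12 s22 sb : ℂ) (h : aC ^ 2 * (1 - s22 * sb) = 1) :
    nmat s11 s12 s22 * wb1 = r2mat aC s22 sb * wb1 * bmat2 aC s11 s12 s22 sb := by
  rw [wb1_eq]
  ext i j
  fin_cases i <;> fin_cases j <;>
    · simp [nmat, r2mat, bmat2, Matrix.mul_apply, Fin.sum_univ_four,
        Matrix.vecHead, Matrix.vecTail]
      try first
        | ring1
        | linear_combination h
        | linear_combination -h
        | linear_combination s22 * h
        | linear_combination -(s22 * h)
        | linear_combination s12 * h
        | linear_combination -(s12 * h)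

def k3mat (ζ ξ : ℂ) : M4 := !![1, 0, 0, 0; 0, ζ, 0, 0; 0, 0, 1, 0; 0, 0, 0, ξ]

def r3mat (ω ωb : ℂ) : M4 := !![1, 0, 0, 0; 0, ω, 0, 0; 0, 0, 1, 0; 0, 0, 0, ωb]

def bmat3 (s11 s12 s22 ζ ω ρ : ℂ) : M4 :=
  !![1, ζ * cc * s12, -s11, -(ζ * cc * s12);
     0, ρ, -(cc * ω * s12), -(ω * ζ * s22);
     0, 0, 1, 0;
     0, 0, -(cc * ω * s12), ρ - ω * ζ * s22]

lemma id3 (s11 s12 s22 ζ ξ ω ωb ρ : ℂ)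
    (hωωb : ω * ωb = 1) (h1 : ρ * ω = ζ) (h2 : ζ * s22 + ξ = ρ * ωb)
    (hc2ω : 2 * cc ^ 2 * (ω * ωb) = 1) :
    nmat s11 s12 s22 * k3mat ζ ξ * (cb2 * wb1) =
      r3mat ω ωb * (cb2 * wb1) * bmat3 s11 s12 s22 ζ ω ρ := by
  rw [wb1_eq, cb2_eq]
  ext i j
  fin_cases i <;> fin_cases j <;>
    · simp [nmat, k3mat, r3mat, bmat3, Matrix.mul_apply, Fin.sum_univ_four,
        Matrix.vecHead, Matrix.vecTail]
      try first
        | ring1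
        | linear_combination cc * h1
        | linear_combination -(cc * h1)
        | linear_combination cc * h2
        | linear_combination -(cc * h2)
        | linear_combination s12 * hc2ω
        | linear_combination -(s12 * hc2ω)
        | linear_combination hωωb
        | linear_combination cc * h2 + 2 * cc * ζ * s22 * hωωb
        | linear_combination -(cc * h2 + 2 * cc * ζ * s22 * hωωb)

/-! ### closure of `K_ℂ` under multiplication -/

lemma KC_mul {k1 k2 : M4} (h1 : k1 ∈ KC) (h2 : k2 ∈ KC) : k1 * k2 ∈ KC := by
  obtain ⟨g1, hg1, rfl⟩ := h1
  obtain ⟨g2, hg2, rfl⟩ := h2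
  have e1 : (!![g1 0 0, g1 0 1, 0, 0; g1 1 0, g1 1 1, 0, 0;
      0, 0, (g1ᵀ)⁻¹ 0 0, (g1ᵀ)⁻¹ 0 1; 0, 0, (g1ᵀ)⁻¹ 1 0, (g1ᵀ)⁻¹ 1 1] : M4)
      = blk g1 (g1ᵀ)⁻¹ := rfl
  have e2 : (!![g2 0 0, g2 0 1, 0, 0; g2 1 0, g2 1 1, 0, 0;
      0, 0, (g2ᵀ)⁻¹ 0 0, (g2ᵀ)⁻¹ 0 1; 0, 0, (g2ᵀ)⁻¹ 1 0, (g2ᵀ)⁻¹ 1 1] : M4)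
      = blk g2 (g2ᵀ)⁻¹ := rfl
  rw [e1, e2, blk_mul]
  refine mem_KC_of (hg1.mul hg2) ?_
  have hd1 : IsUnit (g1ᵀ).det := by
    rw [Matrix.det_transpose]; exact (Matrix.isUnit_iff_isUnit_det g1).mp hg1
  have hd2 : IsUnit (g2ᵀ).det := by
    rw [Matrix.det_transpose]; exact (Matrix.isUnit_iff_isUnit_det g2).mp hg2
  rw [Matrix.transpose_mul]
  calc g2ᵀ * g1ᵀ * ((g1ᵀ)⁻¹ * (g2ᵀ)⁻¹)
      = g2ᵀ * (g1ᵀ * (g1ᵀ)⁻¹) * (g2ᵀ)⁻¹ := by noncomm_ring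
    _ = 1 := by rw [Matrix.mul_nonsing_inv _ hd1, Matrix.mul_one,
          Matrix.mul_nonsing_inv _ hd2]

/-- gluing lemma for reassociating the products. -/
lemma assoc_helper (a t n k k' g : M4) (h : k * k' = 1) :
    (a * t * (n * k)) * (k' * g) = a * (t * (n * g)) := by
  rw [show (a * t * (n * k)) * (k' * g) = a * (t * (n * ((k * k') * g))) from by
    noncomm_ring, h, Matrix.one_mul]

end Rem31

open Rem31

theorem stmt_10 (x : M4) (hx1 : x ∈ dc GR 1 Qpar)
    (hx2 : x ∈ dc GR (t1 (-(Real.pi / 4))) Qbar) :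
    ((fun m => x * m) '' dc KC (wb1 * wb2) Bor ∩ dc GR (cb1 * wb2) Bor).Nonempty ∧
    ((fun m => x * m) '' dc KC wb1 Bor ∩ dc GR cb1 Bor).Nonempty ∧
    ((fun m => x * m) '' dc KC (cb2 * wb1) Bor ∩ dc GR (cb1 * cb2) Bor).Nonempty := by
  classical
  obtain ⟨a, ha, qb, hqb, hx⟩ := hx2
  obtain ⟨a1, ha1, q1, hq1, hx1'⟩ := hx1
  obtain ⟨s11, s12, s22, k, k', hk, hk', hkk', hk'k, hfac⟩ := qbar_decomp hqb
  rw [hfac] at hx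
  have hxm : x = a * tm * (nmat s11 s12 s22 * k) := hx
  have hxk' : x * k' = a * tm * nmat s11 s12 s22 := by
    rw [hxm]
    calc a * tm * (nmat s11 s12 s22 * k) * k'
        = a * tm * (nmat s11 s12 s22 * (k * k')) := by noncomm_ring
      _ = a * tm * nmat s11 s12 s22 := by rw [hkk', Matrix.mul_one]
  ------------------------------------------------------------------
  -- Positivity : `normSq s22 < 1`
  ------------------------------------------------------------------
  have hk'KC := hk'
  obtain ⟨g', hg'U, hk'eq⟩ := hk'
  have hzU : k'.mulVec (stdVec 1) ∈ Uplus := by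
    unfold Uplus
    rw [Submodule.mem_span_pair]
    refine ⟨(k'.mulVec (stdVec 1)) 0, (k'.mulVec (stdVec 1)) 1, ?_⟩
    funext i
    fin_cases i <;>
      simp [stdVec, Matrix.mulVec_single, hk'eq, Matrix.vecHead, Matrix.vecTail]
  set u : Fin 4 → ℂ := q1.mulVec (k'.mulVec (stdVec 1)) with hudef
  set vv : Fin 4 → ℂ := (tm * nmat s11 s12 s22).mulVec (stdVec 1) with hvdef
  have huU : u ∈ Uplus := by
    have h0 : q1.mulVecLin (k'.mulVec (stdVec 1)) ∈ Uplus.map q1.mulVecLin :=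
      Submodule.mem_map_of_mem hzU
    rw [hq1.2] at h0
    simpa [hudef] using h0
  have hchain : a.mulVec vv = a1.mulVec u := by
    rw [hvdef, hudef, Matrix.mulVec_mulVec, ← Matrix.mul_assoc, ← hxk',
      ← Matrix.mulVec_mulVec, hx1', Matrix.mul_one, ← Matrix.mulVec_mulVec]
  have hveq : vv = ![cc * s12, 1, cc * s12, s22] := by
    rw [hvdef, tm_eq]
    funext i
    fin_cases i <;>
      simp [stdVec, Matrix.mulVec_single, nmat, Matrix.mul_apply, Fin.sum_univ_four,
        Matrix.vecHead, Matrix.vecTail]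
  have hvv : hermForm vv vv = 1 - (starRingEnd ℂ) s22 * s22 := by
    rw [hveq]
    simp [hermForm, star_mul', Complex.star_def, star_cc]
    try ring
  have hherm : hermForm vv vv = hermForm u u := by
    rw [← ha.2, hchain, ha1.2]
  obtain ⟨α, β, hu⟩ := Submodule.mem_span_pair.1 (by
    have := huU; unfold Uplus at this; exact this)
  have hcomp0 : u 0 = α := by
    have := congr_fun hu 0; simpa [stdVec] using this.symm
  have hcomp1 : u 1 = β := by
    have := congr_fun hu 1; simpa [stdVec] using this.symm
  have hcomp2 : u 2 = 0 := by
    have := congr_fun hu 2; simpa [stdVec] using this.symm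
  have hcomp3 : u 3 = 0 := by
    have := congr_fun hu 3; simpa [stdVec] using this.symm
  have huu : hermForm u u = ((Complex.normSq α + Complex.normSq β : ℝ) : ℂ) := by
    simp only [hermForm]
    rw [hcomp0, hcomp1, hcomp2, hcomp3]
    simp only [Complex.star_def]
    rw [show (starRingEnd ℂ) α * α = (Complex.normSq α : ℂ) by
        rw [mul_comm]; exact Complex.mul_conj α,
      show (starRingEnd ℂ) β * β = (Complex.normSq β : ℂ) by
        rw [mul_comm]; exact Complex.mul_conj β]
    push_cast
    ring
  have hune : ¬(α = 0 ∧ β = 0) := by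
    rintro ⟨rfl, rfl⟩
    have hu0 : u = 0 := by
      rw [← hu]; funext i; simp
    rw [hu0, Matrix.mulVec_zero] at hchain
    have hdet : IsUnit a.det := (Matrix.isUnit_iff_isUnit_det a).mp ha.1.1
    have hv0 : vv = 0 := by
      have h1 : (a⁻¹ * a).mulVec vv = 0 := by
        rw [← Matrix.mulVec_mulVec, hchain, Matrix.mulVec_zero]
      rwa [Matrix.nonsing_inv_mul a hdet, Matrix.one_mulVec] at h1
    have := congr_fun hv0 1
    rw [hveq] at this
    simp at this
  have hpos : 0 < Complex.normSq α + Complex.normSq β := by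
    rcases not_and_or.1 hune with h | h
    · have h1 := Complex.normSq_pos.2 h
      have h2 := Complex.normSq_nonneg β
      linarith
    · have h1 := Complex.normSq_pos.2 h
      have h2 := Complex.normSq_nonneg α
      linarith
  have hclt : Complex.normSq s22 < 1 := by
    have h1 : (1 - (starRingEnd ℂ) s22 * s22 : ℂ) =
        ((Complex.normSq α + Complex.normSq β : ℝ) : ℂ) := by
      rw [← hvv, hherm, huu]
    have h2 : (1 - (starRingEnd ℂ) s22 * s22 : ℂ) = ((1 - Complex.normSq s22 : ℝ) : ℂ) := by
      rw [show (starRingEnd ℂ) s22 * s22 = (Complex.normSq s22 : ℂ) by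
        rw [mul_comm]; exact Complex.mul_conj s22]
      push_cast; ring
    rw [h2] at h1
    have h3 : (1 - Complex.normSq s22 : ℝ) = Complex.normSq α + Complex.normSq β :=
      Complex.ofReal_inj.1 h1
    linarith
  ------------------------------------------------------------------
  -- Case 2 data
  ------------------------------------------------------------------
  have hd2pos : (0:ℝ) < 1 - Complex.normSq s22 := by linarith
  set aR : ℝ := (Real.sqrt (1 - Complex.normSq s22))⁻¹ with haRdef
  have haR2 : ((aR : ℝ) : ℂ) ^ 2 * (1 - s22 * (starRingEnd ℂ) s22) = 1 := by
    have hs : Real.sqrt (1 - Complex.normSq s22) ^ 2 = 1 - Complex.normSq s22 :=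
      Real.sq_sqrt (le_of_lt hd2pos)
    have h4 : (aR : ℝ) ^ 2 * (1 - Complex.normSq s22) = 1 := by
      rw [haRdef, inv_pow, hs]
      field_simp
    have h5 : (1 - s22 * (starRingEnd ℂ) s22 : ℂ) = ((1 - Complex.normSq s22 : ℝ) : ℂ) := by
      rw [Complex.mul_conj]
      push_cast; ring
    rw [h5]
    exact_mod_cast h4
  set r2 : M4 := r2mat ((aR : ℝ) : ℂ) s22 ((starRingEnd ℂ) s22) with hr2def
  have hr2GR : r2 ∈ GR := by
    constructor
    · apply mem_GC_of
      rw [hr2def]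
      ext i j
      fin_cases i <;> fin_cases j <;>
        · simp [r2mat, Jmat, Matrix.mul_apply, Matrix.transpose_apply, Fin.sum_univ_four,
            Matrix.vecHead, Matrix.vecTail]
          try first
            | ring1
            | linear_combination haR2
            | linear_combination -haR2
    · intro w z
      rw [hr2def]
      simp [hermForm, r2mat, Matrix.mulVec, dotProduct, Fin.sum_univ_four,
        Matrix.vecHead, Matrix.vecTail, star_add, star_mul', star_star, Complex.star_def,
        Complex.conj_ofReal, map_add, _root_.map_mul]
      try linear_combination ((starRingEnd ℂ) (w 1) * z 1 - (starRingEnd ℂ) (w 3) * z 3) * haR2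
  have hb2Bor : bmat2 ((aR : ℝ) : ℂ) s11 s12 s22 ((starRingEnd ℂ) s22) ∈ Bor := by
    apply mem_Bor_of
    · ext i j
      fin_cases i <;> fin_cases j <;>
        · simp [bmat2, Jmat, Matrix.mul_apply, Matrix.transpose_apply, Fin.sum_univ_four,
            Matrix.vecHead, Matrix.vecTail]
          try first
            | ring1
            | linear_combination haR2
            | linear_combination -haR2
            | linear_combination s12 * haR2
            | linear_combination -(s12 * haR2)
            | linear_combination s22 * haR2
            | linear_combination -(s22 * haR2)
    all_goals simp [bmat2, Matrix.vecHead, Matrix.vecTail]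
  ------------------------------------------------------------------
  -- Case 3 data
  ------------------------------------------------------------------
  obtain ⟨ω, hω2⟩ := IsAlgClosed.exists_pow_nat_eq
    (if s22 = 0 then (1:ℂ) else -((‖s22‖ : ℝ) : ℂ) / s22) zero_lt_two
  have hwne : (if s22 = 0 then (1:ℂ) else -((‖s22‖ : ℝ) : ℂ) / s22) ≠ 0 := by
    split_ifs with h
    · exact one_ne_zero
    · refine div_ne_zero ?_ h
      have h6 : ‖s22‖ ≠ 0 := norm_ne_zero_iff.mpr h
      simpa using h6
  have hnormw : Complex.normSq (if s22 = 0 then (1:ℂ) else -((‖s22‖ : ℝ) : ℂ) / s22)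
      = 1 := by
    split_ifs with h
    · simp
    · rw [Complex.normSq_div, Complex.normSq_neg, Complex.normSq_ofReal]
      rw [show ‖s22‖ * ‖s22‖ = Complex.normSq s22 from by
        rw [← Complex.sq_norm]; ring]
      exact div_self (by simpa using (Complex.normSq_pos.2 h).ne')
  have hωne : ω ≠ 0 := by
    intro h0; rw [h0] at hω2; simp at hω2; exact hwne hω2.symm
  have hωωb : ω * (starRingEnd ℂ) ω = 1 := by
    have hmp : Complex.normSq (ω ^ 2) = Complex.normSq ω ^ 2 := map_pow Complex.normSq ω 2
    have h1 : Complex.normSq ω ^ 2 = 1 := by rw [← hmp, hω2, hnormw]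
    have h2 : Complex.normSq ω = 1 := by
      have h3 := Complex.normSq_nonneg ω
      nlinarith
    rw [Complex.mul_conj, h2]
    norm_num
  set ρR : ℝ := (Real.sqrt (1 + ‖s22‖))⁻¹ with hρdef
  have hρpos : 0 < ρR := by
    rw [hρdef]
    have h7 : 0 < Real.sqrt (1 + ‖s22‖) :=
      Real.sqrt_pos.2 (by positivity)
    positivity
  have hρ2 : ρR ^ 2 * (1 + ‖s22‖) = 1 := by
    rw [hρdef, inv_pow, Real.sq_sqrt (by positivity)]
    field_simp
  have hρ2C : ((ρR : ℝ) : ℂ) ^ 2 * (1 + ((‖s22‖ : ℝ) : ℂ)) = 1 := by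
    exact_mod_cast hρ2
  have hws : (if s22 = 0 then (1:ℂ) else -((‖s22‖ : ℝ) : ℂ) / s22) * s22 =
      -((‖s22‖ : ℝ) : ℂ) := by
    split_ifs with h
    · simp [h]
    · field_simp
  set ρC : ℂ := ((ρR : ℝ) : ℂ) with hρCdef
  set ζ : ℂ := ρC * ω with hζdef
  have hζne : ζ ≠ 0 := by
    rw [hζdef]
    refine mul_ne_zero ?_ hωne
    rw [hρCdef]
    exact_mod_cast hρpos.ne'
  have hmainC : ρC ^ 2 = ζ ^ 2 * s22 + 1 := by
    rw [hζdef]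
    linear_combination hρ2C + (-(s22 * ρC ^ 2)) * hω2 + (-(ρC ^ 2)) * hws
  have hζξ : ζ * ζ⁻¹ = 1 := mul_inv_cancel₀ hζne
  have h2rel : ζ * s22 + ζ⁻¹ = ρC * (starRingEnd ℂ) ω := by
    have hcan : ζ * (ζ * s22 + ζ⁻¹) = ζ * (ρC * (starRingEnd ℂ) ω) := by
      have e1 : ζ * (ζ * s22 + ζ⁻¹) = ζ ^ 2 * s22 + 1 := by
        field_simp
      have e2 : ζ * (ρC * (starRingEnd ℂ) ω) = ρC ^ 2 * (ω * (starRingEnd ℂ) ω) := by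
        rw [hζdef]; ring
      rw [e1, e2, hωωb, mul_one, hmainC]
    exact mul_left_cancel₀ hζne hcan
  have hc2ω : 2 * cc ^ 2 * (ω * (starRingEnd ℂ) ω) = 1 := by
    rw [hωωb, cc_sq]
    norm_num
  have hk3KC : k3mat ζ ζ⁻¹ ∈ KC := by
    have hb : k3mat ζ ζ⁻¹ = blk !![1, 0; 0, ζ] !![1, 0; 0, ζ⁻¹] := by
      ext i j
      fin_cases i <;> fin_cases j <;>
        simp [k3mat, blk, Matrix.vecHead, Matrix.vecTail]
    rw [hb]
    apply mem_KC_of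
    · rw [Matrix.isUnit_iff_isUnit_det, Matrix.det_fin_two_of]
      simpa using isUnit_iff_ne_zero.2 hζne
    · ext i j
      fin_cases i <;> fin_cases j <;>
        · simp [Matrix.mul_apply, Matrix.transpose_apply, Fin.sum_univ_two,
            Matrix.one_apply, Matrix.vecHead, Matrix.vecTail]
          try exact mul_inv_cancel₀ hζne
  set r3 : M4 := r3mat ω ((starRingEnd ℂ) ω) with hr3def
  have hr3GR : r3 ∈ GR := by
    constructor
    · apply mem_GC_of
      rw [hr3def]
      ext i j
      fin_cases i <;> fin_cases j <;>
        · simp [r3mat, Jmat, Matrix.mul_apply, Matrix.transpose_apply, Fin.sum_univ_four,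
            Matrix.vecHead, Matrix.vecTail]
          try first
            | ring1
            | linear_combination hωωb
            | linear_combination -hωωb
    · intro w z
      rw [hr3def]
      simp [hermForm, r3mat, Matrix.mulVec, dotProduct, Fin.sum_univ_four,
        Matrix.vecHead, Matrix.vecTail, star_add, star_mul', star_star, Complex.star_def,
        map_add, _root_.map_mul]
      try linear_combination ((starRingEnd ℂ) (w 1) * z 1 -
        (starRingEnd ℂ) (w 3) * z 3) * hωωb
  have hb3Bor : bmat3 s11 s12 s22 ζ ω ρC ∈ Bor := by
    apply mem_Bor_of
    · ext i j
      fin_cases i <;> fin_cases j <;>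
        · simp [bmat3, Jmat, Matrix.mul_apply, Matrix.transpose_apply, Fin.sum_univ_four,
            Matrix.vecHead, Matrix.vecTail]
          try first
            | ring1
            | linear_combination cc * s12 * hζdef
            | linear_combination -(cc * s12 * hζdef)
            | linear_combination hmainC + s22 * ζ * hζdef
            | linear_combination -(hmainC + s22 * ζ * hζdef)
            | linear_combination hmainC
            | linear_combination -hmainC
            | linear_combination hζdef
            | linear_combination -hζdef
    all_goals simp [bmat3, Matrix.vecHead, Matrix.vecTail]
  have hb1Bor : bmat1 s11 s12 s22 ∈ Bor := by
    apply mem_Bor_of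
    · ext i j
      fin_cases i <;> fin_cases j <;>
        · simp [bmat1, Jmat, Matrix.mul_apply, Matrix.transpose_apply, Fin.sum_univ_four,
            Matrix.vecHead, Matrix.vecTail]
          try ring1
    all_goals simp [bmat1, Matrix.vecHead, Matrix.vecTail]
  ------------------------------------------------------------------
  -- Assembly
  ------------------------------------------------------------------
  refine ⟨⟨x * (k' * (wb1 * wb2)), ⟨k' * (wb1 * wb2), ?_, rfl⟩, ?_⟩,
    ⟨x * (k' * wb1), ⟨k' * wb1, ?_, rfl⟩, ?_⟩,
    ⟨x * ((k' * k3mat ζ ζ⁻¹) * (cb2 * wb1)), ⟨(k' * k3mat ζ ζ⁻¹) * (cb2 * wb1), ?_, rfl⟩, ?_⟩⟩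
  · exact ⟨k', hk'KC, 1, one_mem_Bor, by rw [Matrix.mul_one]⟩
  · -- x S₂ lands in G_ℝ (cb1 wb2) B
    refine ⟨a, ha, bmat1 s11 s12 s22, hb1Bor, ?_⟩
    calc x * (k' * (wb1 * wb2))
        = (a * tm * (nmat s11 s12 s22 * k)) * (k' * (wb1 * wb2)) := by rw [hxm]
      _ = a * (tm * (nmat s11 s12 s22 * (wb1 * wb2))) := assoc_helper _ _ _ _ _ _ hkk'
      _ = a * (tm * ((wb1 * wb2) * bmat1 s11 s12 s22)) := by rw [id1]
      _ = a * ((tm * wb1) * (wb2 * bmat1 s11 s12 s22)) := by noncomm_ring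
      _ = a * (cb1 * (wb2 * bmat1 s11 s12 s22)) := by rw [id_tm_wb1]
      _ = a * (cb1 * wb2) * bmat1 s11 s12 s22 := by noncomm_ring
  · exact ⟨k', hk'KC, 1, one_mem_Bor, by rw [Matrix.mul_one]⟩
  · -- x S₄ lands in G_ℝ cb1 B
    refine ⟨a * r2, GR_mul ha hr2GR, bmat2 ((aR : ℝ) : ℂ) s11 s12 s22 ((starRingEnd ℂ) s22),
      hb2Bor, ?_⟩
    have hcomm2 : tm * r2 = r2 * tm := by
      rw [tm_eq, hr2def]
      exact comm_13_24 _ _ _ _ _ _ _ _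
    calc x * (k' * wb1)
        = (a * tm * (nmat s11 s12 s22 * k)) * (k' * wb1) := by rw [hxm]
      _ = a * (tm * (nmat s11 s12 s22 * wb1)) := assoc_helper _ _ _ _ _ _ hkk'
      _ = a * (tm * (r2 * wb1 * bmat2 ((aR : ℝ) : ℂ) s11 s12 s22 ((starRingEnd ℂ) s22))) := by
          rw [id2 _ _ _ _ _ haR2]
      _ = a * ((tm * r2) * (wb1 * bmat2 ((aR : ℝ) : ℂ) s11 s12 s22 ((starRingEnd ℂ) s22))) := by
          noncomm_ring
      _ = a * ((r2 * tm) * (wb1 * bmat2 ((aR : ℝ) : ℂ) s11 s12 s22 ((starRingEnd ℂ) s22))) := by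
          rw [hcomm2]
      _ = (a * r2) * ((tm * wb1) * bmat2 ((aR : ℝ) : ℂ) s11 s12 s22 ((starRingEnd ℂ) s22)) := by
          noncomm_ring
      _ = (a * r2) * (cb1 * bmat2 ((aR : ℝ) : ℂ) s11 s12 s22 ((starRingEnd ℂ) s22)) := by
          rw [id_tm_wb1]
      _ = (a * r2) * cb1 * bmat2 ((aR : ℝ) : ℂ) s11 s12 s22 ((starRingEnd ℂ) s22) := by
          noncomm_ring
  · exact ⟨k' * k3mat ζ ζ⁻¹, KC_mul hk'KC hk3KC, 1, one_mem_Bor, by rw [Matrix.mul_one]⟩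
  · -- x S₆ lands in G_ℝ (cb1 cb2) B
    refine ⟨a * r3, GR_mul ha hr3GR, bmat3 s11 s12 s22 ζ ω ρC, hb3Bor, ?_⟩
    have hcomm3 : tm * r3 = r3 * tm := by
      rw [tm_eq, hr3def]
      exact comm_13_24 _ _ _ _ _ _ _ _
    have hid3 : nmat s11 s12 s22 * k3mat ζ ζ⁻¹ * (cb2 * wb1) =
        r3 * (cb2 * wb1) * bmat3 s11 s12 s22 ζ ω ρC := by
      rw [hr3def]
      exact id3 s11 s12 s22 ζ ζ⁻¹ ω ((starRingEnd ℂ) ω) ρC hωωb hζdef.symm h2rel hc2ω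
    calc x * ((k' * k3mat ζ ζ⁻¹) * (cb2 * wb1))
        = (a * tm * (nmat s11 s12 s22 * k)) * ((k' * k3mat ζ ζ⁻¹) * (cb2 * wb1)) := by
          rw [hxm]
      _ = a * (tm * (nmat s11 s12 s22 * ((k * k') * (k3mat ζ ζ⁻¹ * (cb2 * wb1))))) := by
          noncomm_ring
      _ = a * (tm * (nmat s11 s12 s22 * k3mat ζ ζ⁻¹ * (cb2 * wb1))) := by
          rw [hkk', Matrix.one_mul]
          noncomm_ring
      _ = a * (tm * (r3 * (cb2 * wb1) * bmat3 s11 s12 s22 ζ ω ρC)) := by rw [hid3]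
      _ = a * ((tm * r3) * (cb2 * (wb1 * bmat3 s11 s12 s22 ζ ω ρC))) := by noncomm_ring
      _ = a * ((r3 * tm) * (cb2 * (wb1 * bmat3 s11 s12 s22 ζ ω ρC))) := by rw [hcomm3]
      _ = a * (r3 * ((tm * cb2) * (wb1 * bmat3 s11 s12 s22 ζ ω ρC))) := by noncomm_ring
      _ = a * (r3 * ((cb2 * tm) * (wb1 * bmat3 s11 s12 s22 ζ ω ρC))) := by rw [comm_tm_cb2]
      _ = a * (r3 * (cb2 * ((tm * wb1) * bmat3 s11 s12 s22 ζ ω ρC))) := by noncomm_ring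
      _ = a * (r3 * (cb2 * (cb1 * bmat3 s11 s12 s22 ζ ω ρC))) := by rw [id_tm_wb1]
      _ = (a * r3) * ((cb2 * cb1) * bmat3 s11 s12 s22 ζ ω ρC) := by noncomm_ring
      _ = (a * r3) * ((cb1 * cb2) * bmat3 s11 s12 s22 ζ ω ρC) := by rw [comm_cb1_cb2]
      _ = (a * r3) * (cb1 * cb2) * bmat3 s11 s12 s22 ζ ω ρC := by noncomm_ring
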